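/- Let H ⊆ G be a normal subgroup, K an algebraically closed field of characteristic 0, and ρ, ρ': G → GL(V) two representations such that ρ|_H = ρ'|_H is absolutely simple, and both det∘ρ and det∘ρ' have finite order. Then there exists a finite-index subgroup G' ⊆ G containing H with ρ|_{G'} = ρ'|_{G'}. -/

import Mathlib

/-- Two representations of `G` with finite-order determinant which agree on a normal
subgroup `H`, on which they are (absolutely) simple, agree on a finite-index subgroup of
`G` containing `H`. -/
theorem eq_on_finiteIndex_of_eq_on_normal_simple
    {K : Type*} [Field K] [CharZero K] [IsAlgClosed K]
    {V : Type*} [AddCommGroup V] [Module K V] [FiniteDimensional K V]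
    {G : Type*} [Group G] (H : Subgroup G) (hH : H.Normal)
    (ρ ρ' : G →* (V ≃ₗ[K] V))
    (hagree : ∀ h ∈ H, ρ h = ρ' h)
    (hsimple : Nontrivial V ∧ ∀ p : Submodule K V,
      (∀ h ∈ H, ∀ v ∈ p, ρ h v ∈ p) → p = ⊥ ∨ p = ⊤)
    (hdet : ∃ m : ℕ, 0 < m ∧ ∀ g : G,
      (LinearMap.det (ρ g : V →ₗ[K] V)) ^ m = 1)
    (hdet' : ∃ m : ℕ, 0 < m ∧ ∀ g : G,
      (LinearMap.det (ρ' g : V →ₗ[K] V)) ^ m = 1) :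
    ∃ G' : Subgroup G, G'.FiniteIndex ∧ H ≤ G' ∧ ∀ g ∈ G', ρ g = ρ' g := by
  classical
  obtain ⟨hV, hsimp⟩ := hsimple
  obtain ⟨m, hm, hdm⟩ := hdet
  obtain ⟨m', hm', hdm'⟩ := hdet'
  have mul_apply : ∀ (e e' : V ≃ₗ[K] V) (v : V), (e * e') v = e (e' v) := fun _ _ _ => rfl
  set n := Module.finrank K V with hn
  have hnpos : 0 < n := Module.finrank_pos
  set NN := n * (m * m') with hNN
  have hNNpos : 0 < NN := by positivity
  -- Schur: any linear map commuting with ρ on H is scalar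
  have schur : ∀ f : V →ₗ[K] V, (∀ h ∈ H, ∀ v, f (ρ h v) = ρ h (f v)) →
      ∃ μ : K, f = μ • LinearMap.id := by
    intro f hf
    obtain ⟨μ, hμ⟩ := Module.End.exists_eigenvalue (f : Module.End K V)
    refine ⟨μ, ?_⟩
    have hne : LinearMap.ker (f - μ • (LinearMap.id : V →ₗ[K] V)) ≠ ⊥ := by
      rw [Module.End.hasEigenvalue_iff] at hμ
      convert hμ using 2
      rw [Module.End.eigenspace_def]; rfl
    have hinv : ∀ h ∈ H, ∀ v ∈ LinearMap.ker (f - μ • (LinearMap.id : V →ₗ[K] V)),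
        ρ h v ∈ LinearMap.ker (f - μ • (LinearMap.id : V →ₗ[K] V)) := by
      intro h hh v hv
      simp only [LinearMap.mem_ker, LinearMap.sub_apply, LinearMap.smul_apply,
        LinearMap.id_apply, sub_eq_zero] at hv ⊢
      rw [hf h hh, hv, map_smul]
    rcases hsimp _ hinv with hbot | htop
    · exact absurd hbot hne
    · have h0 : f - μ • LinearMap.id = 0 := LinearMap.ker_eq_top.mp htop
      have := sub_eq_zero.mp h0
      exact this
  -- the scalar factor τ g
  set τ : G → (V ≃ₗ[K] V) := fun g => ρ' g * (ρ g)⁻¹ with hτ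
  -- τ g commutes with ρ h for h ∈ H
  have hcommg : ∀ g, ∀ h ∈ H, τ g * ρ h = ρ h * τ g := by
    intro g h hh
    have hk : g⁻¹ * h * g ∈ H := by simpa [mul_assoc] using hH.conj_mem h hh g⁻¹
    have h1 : ρ (g⁻¹ * h * g) = (ρ g)⁻¹ * (ρ h * ρ g) := by
      rw [map_mul, map_mul, map_inv, mul_assoc]
    have h2 : ρ' (g⁻¹ * h * g) = (ρ' g)⁻¹ * (ρ' h * ρ' g) := by
      rw [map_mul, map_mul, map_inv, mul_assoc]
    have h3 := hagree _ hk
    rw [h1, h2, hagree h hh] at h3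
    have key2 : ρ' g * ((ρ g)⁻¹ * (ρ' h * ρ g)) * (ρ g)⁻¹ = ρ' h * (ρ' g * (ρ g)⁻¹) := by
      rw [h3]; group
    calc τ g * ρ h = ρ' g * (ρ g)⁻¹ * ρ h := rfl
      _ = ρ' g * ((ρ g)⁻¹ * (ρ' h * ρ g)) * (ρ g)⁻¹ := by rw [← hagree h hh]; group
      _ = ρ' h * (ρ' g * (ρ g)⁻¹) := key2
      _ = ρ h * τ g := by rw [hagree h hh]
  have hcomm : ∀ g, ∀ h ∈ H, ∀ v, (τ g) (ρ h v) = ρ h ((τ g) v) := by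
    intro g h hh v
    have := congrArg (fun e : V ≃ₗ[K] V => e v) (hcommg g h hh)
    simpa [mul_apply] using this
  -- τ g is a scalar, an NN-th root of unity
  have hscalar : ∀ g, ∃ μ : K, μ ^ NN = 1 ∧ ∀ v, (τ g) v = μ • v := by
    intro g
    obtain ⟨μ, hμ⟩ := schur ((τ g : V ≃ₗ[K] V) : V →ₗ[K] V) (hcomm g)
    have happ : ∀ v, (τ g) v = μ • v := by
      intro v
      have := congrArg (fun f : V →ₗ[K] V => f v) hμ
      simpa using this
    refine ⟨μ, ?_, happ⟩
    have hdetτ : LinearMap.det ((τ g : V ≃ₗ[K] V) : V →ₗ[K] V) = μ ^ n := by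
      rw [hμ, LinearMap.det_smul, LinearMap.det_id, mul_one]
    have hmulρ : τ g * ρ g = ρ' g := inv_mul_cancel_right _ _
    have hdeteq : μ ^ n * LinearMap.det (ρ g : V →ₗ[K] V)
        = LinearMap.det (ρ' g : V →ₗ[K] V) := by
      rw [← hdetτ, ← map_mul LinearMap.det, ← LinearEquiv.coe_toLinearMap_mul, hmulρ]
    have hthis : (μ ^ n) ^ (m * m') * (LinearMap.det (ρ g : V →ₗ[K] V)) ^ (m * m')
        = (LinearMap.det (ρ' g : V →ₗ[K] V)) ^ (m * m') := by
      rw [← mul_pow, hdeteq]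
    rw [show (LinearMap.det (ρ g : V →ₗ[K] V)) ^ (m * m')
        = ((LinearMap.det (ρ g : V →ₗ[K] V)) ^ m) ^ m' by rw [← pow_mul],
      hdm, one_pow, mul_one,
      show (LinearMap.det (ρ' g : V →ₗ[K] V)) ^ (m * m')
        = ((LinearMap.det (ρ' g : V →ₗ[K] V)) ^ m') ^ m by rw [← pow_mul, mul_comm],
      hdm', one_pow] at hthis
    rw [hNN, pow_mul]
    exact hthis
  -- τ is a monoid hom
  have hτmul : ∀ a b : G, τ (a * b) = τ a * τ b := by
    intro a b
    obtain ⟨μ, _, hμ⟩ := hscalar b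
    ext v
    have h1 : (τ (a * b)) v = μ • ((τ a) v) := by
      have e1 : τ (a * b) = ρ' a * (τ b * (ρ a)⁻¹) := by
        rw [hτ]; simp only [map_mul, mul_inv_rev]; group
      rw [e1, mul_apply, mul_apply, hμ, map_smul]
      rfl
    have h2 : (τ a * τ b) v = μ • ((τ a) v) := by
      rw [mul_apply, hμ, map_smul]
    rw [h1, h2]
  let φ : G →* (V ≃ₗ[K] V) :=
    { toFun := τ
      map_one' := by simp [hτ]
      map_mul' := hτmul }
  refine ⟨φ.ker, ?_, ?_, ?_⟩
  · -- finite index: range of φ is finite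
    constructor
    rw [Subgroup.index_ker]
    have hS : Set.Finite {μ : K | μ ^ NN = 1} := by
      apply Set.Finite.subset (Polynomial.nthRoots NN (1 : K)).toFinset.finite_toSet
      intro μ hμ
      simp only [Multiset.mem_toFinset, Finset.coe_sort_coe, Set.mem_setOf_eq] at hμ ⊢
      exact Multiset.mem_toFinset.mpr ((Polynomial.mem_nthRoots hNNpos).mpr hμ)
    obtain ⟨v₀, hv₀⟩ := exists_ne (0 : V)
    have hfin : (Set.range τ).Finite := by
      apply Set.Finite.of_finite_image (f := fun e : V ≃ₗ[K] V => e v₀)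
      · apply Set.Finite.subset (hS.image (fun μ : K => μ • v₀))
        rintro - ⟨-, ⟨g, rfl⟩, rfl⟩
        obtain ⟨μ, hμ1, hμ2⟩ := hscalar g
        exact ⟨μ, hμ1, (hμ2 v₀).symm⟩
      · rintro - ⟨g, rfl⟩ - ⟨g', rfl⟩ hvv
        obtain ⟨μ, _, hμ2⟩ := hscalar g
        obtain ⟨μ', _, hμ2'⟩ := hscalar g'
        simp only [hμ2, hμ2'] at hvv
        have hμμ : μ = μ' := by
          by_contra hne
          exact hv₀ (by
            have := sub_eq_zero.mpr hvv
            rw [← sub_smul] at this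
            exact (smul_eq_zero.mp this).resolve_left (sub_ne_zero.mpr hne))
        ext v
        rw [hμ2, hμ2', hμμ]
    have hfin' : Finite φ.range := by
      have : (φ.range : Set (V ≃ₗ[K] V)).Finite := by
        convert hfin using 1
        exact MonoidHom.coe_range φ
      exact this.to_subtype
    have : Nonempty φ.range := ⟨1, 1, map_one φ⟩
    exact Nat.card_pos.ne'
  · intro h hh
    show τ h = 1
    rw [hτ]
    simp only
    rw [← hagree h hh, mul_inv_cancel]
  · intro g hg
    have h1 : τ g = 1 := hg
    exact (mul_inv_eq_one.mp h1).symm
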